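/- Let X be a nonempty set and Ψ a nonempty set of functions g : X → ℝ with |g(x)| ≤ 1 for all g ∈ Ψ and x ∈ X. Let λ > 1, n ≥ 1, and x_1,…,x_n ∈ X, and suppose d ∈ ℕ is such that the ℓ1-Eluder dimension of Ψ at scale 1/(8λn) is at most d. Then ∑_{i=1}^n min{ 1, sup_{g∈Ψ} |g(x_i)| / (λ + ∑_{t=1}^{i−1} |g(x_t)|) } ≤ 12·(log₂(4λn))²·d + λ⁻¹. -/

import Mathlib

open Finset

/-- A finite sequence `a : Fin m → X` is `ε`-independent for `Ψ` if for every index `i`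
there is `g ∈ Ψ` with `∑_{j<i} |g (a j)| ≤ ε` and `|g (a i)| > ε`. -/
def IsEpsIndep {X : Type*} (Ψ : Set (X → ℝ)) (ε : ℝ) {m : ℕ} (a : Fin m → X) : Prop :=
  ∀ i : Fin m, ∃ g ∈ Ψ, (∑ j ∈ Finset.Iio i, |g (a j)|) ≤ ε ∧ ε < |g (a i)|

/-- The ℓ1-Eluder dimension of `Ψ` at scale `ε₀` is at most `d`: for every `ε ≥ ε₀`,
every `ε`-independent sequence for `Ψ` has length at most `d`. -/
def EluderDimLE {X : Type*} (Ψ : Set (X → ℝ)) (ε₀ : ℝ) (d : ℕ) : Prop :=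
  ∀ ε ≥ ε₀, ∀ m : ℕ, ∀ a : Fin m → X, IsEpsIndep Ψ ε a → m ≤ d

lemma indep_card_le {X : Type*} {Ψ : Set (X → ℝ)} {ε₀ ε : ℝ} {d : ℕ}
    (hd : EluderDimLE Ψ ε₀ d) (hε : ε₀ ≤ ε)
    {n : ℕ} (x : Fin n → X) (gg : Fin n → X → ℝ) (A : Finset (Fin n))
    (hA : ∀ i ∈ A, gg i ∈ Ψ ∧ ε < |gg i (x i)|)
    (hGood : ∀ i ∈ A, (∑ t ∈ A.filter (fun t => t < i), |gg i (x t)|) ≤ ε) :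
    A.card ≤ d := by
  set e := A.orderIsoOfFin rfl with he
  apply hd ε hε A.card (fun j => x ((e j : Fin n)))
  intro i
  obtain ⟨hmem, hbig⟩ := hA (e i) (e i).2
  refine ⟨gg (e i), hmem, ?_, hbig⟩
  have key : ∑ j ∈ Finset.Iio i, |gg (e i) (x (e j))|
      = ∑ t ∈ A.filter (fun t => t < (e i : Fin n)), |gg (e i) (x t)| := by
    apply Finset.sum_bij (fun j _ => ((e j : Fin n)))
    · intro j hj
      simp only [Finset.mem_filter]
      refine ⟨(e j).2, ?_⟩
      exact Subtype.coe_lt_coe.mpr (e.lt_iff_lt.mpr (Finset.mem_Iio.mp hj))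
    · intro j₁ h₁ j₂ h₂ hcoe
      have : e j₁ = e j₂ := Subtype.coe_injective hcoe
      exact e.injective this
    · intro t ht
      obtain ⟨htA, htlt⟩ := Finset.mem_filter.mp ht
      refine ⟨e.symm ⟨t, htA⟩, ?_, ?_⟩
      · rw [Finset.mem_Iio]
        have : e (e.symm ⟨t, htA⟩) < e i := by
          rw [e.apply_symm_apply]
          exact Subtype.coe_lt_coe.mp htlt
        exact e.lt_iff_lt.mp this
      · simp
    · intro j hj; rfl
  rw [key]
  exact hGood _ (e i).2

lemma partition_card_le {X : Type*} {Ψ : Set (X → ℝ)} {ε₀ ε M : ℝ} {d N : ℕ}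
    (hd : EluderDimLE Ψ ε₀ d) (hε : ε₀ ≤ ε) (hNε : M < N * ε)
    {n : ℕ} (x : Fin n → X) (gg : Fin n → X → ℝ)
    (B : Finset (Fin n))
    (hB : ∀ i ∈ B, gg i ∈ Ψ ∧ (∑ t ∈ Finset.Iio i, |gg i (x t)|) ≤ M ∧ ε < |gg i (x i)|) :
    B.card ≤ N * d := by
  suffices h : ∃ P : Fin N → Finset (Fin n),
      (∀ b, P b ⊆ B) ∧
      (∀ b₁ b₂, b₁ ≠ b₂ → Disjoint (P b₁) (P b₂)) ∧
      (∀ i ∈ B, ∃ b, i ∈ P b) ∧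
      (∀ b, ∀ i ∈ P b, (∑ t ∈ (P b).filter (fun t => t < i), |gg i (x t)|) ≤ ε) by
    obtain ⟨P, hPsub, hPdisj, hPcover, hPgood⟩ := h
    have hsub : B ⊆ Finset.univ.biUnion P := by
      intro i hi
      obtain ⟨b, hb⟩ := hPcover i hi
      exact Finset.mem_biUnion.mpr ⟨b, Finset.mem_univ b, hb⟩
    calc B.card ≤ (Finset.univ.biUnion P).card := Finset.card_le_card hsub
      _ ≤ ∑ b : Fin N, (P b).card := Finset.card_biUnion_le
      _ ≤ ∑ _b : Fin N, d := by
          apply Finset.sum_le_sum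
          intro b _
          exact indep_card_le hd hε x gg (P b)
            (fun i hi => ⟨(hB i (hPsub b hi)).1, (hB i (hPsub b hi)).2.2⟩)
            (hPgood b)
      _ = N * d := by simp [mul_comm]
  clear hd hε
  induction B using Finset.strongInduction with
  | _ B ih =>
    rcases B.eq_empty_or_nonempty with rfl | hne
    · exact ⟨fun _ => ∅, by simp, by simp, by simp, by simp⟩
    · obtain ⟨i, himem, hmax⟩ : ∃ i ∈ B, ∀ t ∈ B, t ≤ i :=
        ⟨B.max' hne, B.max'_mem hne, fun t ht => B.le_max' t ht⟩
      have hss : B.erase i ⊂ B := Finset.erase_ssubset himem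
      obtain ⟨P, hPsub, hPdisj, hPcover, hPgood⟩ :=
        ih (B.erase i) hss (fun t ht => hB t (Finset.mem_of_mem_erase ht))
      have herase_lt : ∀ t ∈ B.erase i, t < i := by
        intro t ht
        exact lt_of_le_of_ne (hmax t (Finset.mem_of_mem_erase ht))
          (Finset.ne_of_mem_erase ht)
      have hM0 : 0 ≤ M :=
        le_trans (Finset.sum_nonneg (fun t _ => abs_nonneg _)) (hB i himem).2.1
      have hex : ∃ b : Fin N, (∑ t ∈ P b, |gg i (x t)|) ≤ ε := by
        by_contra hcon
        push_neg at hcon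
        have hN : 0 < N := by
          by_contra hN0
          push_neg at hN0
          interval_cases N
          simp at hNε
          linarith
        have h1 : (N : ℝ) * ε < ∑ b : Fin N, ∑ t ∈ P b, |gg i (x t)| := by
          have := Finset.sum_lt_sum_of_nonempty (s := (Finset.univ : Finset (Fin N)))
            (f := fun _ => ε) (g := fun b => ∑ t ∈ P b, |gg i (x t)|)
            (by
              have : Nonempty (Fin N) := Fin.pos_iff_nonempty.mp hN
              exact Finset.univ_nonempty) (fun b _ => hcon b)
          simpa [mul_comm] using this
        have h2 : ∑ b : Fin N, ∑ t ∈ P b, |gg i (x t)|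
            = ∑ t ∈ Finset.univ.biUnion P, |gg i (x t)| := by
          rw [Finset.sum_biUnion]
          intro b₁ _ b₂ _ hne'
          exact hPdisj b₁ b₂ hne'
        have h3 : ∑ t ∈ Finset.univ.biUnion P, |gg i (x t)|
            ≤ ∑ t ∈ Finset.Iio i, |gg i (x t)| := by
          apply Finset.sum_le_sum_of_subset_of_nonneg
          · intro t ht
            obtain ⟨b, _, hb⟩ := Finset.mem_biUnion.mp ht
            exact Finset.mem_Iio.mpr (herase_lt t (hPsub b hb))
          · intro t _ _; exact abs_nonneg _
        have h4 := (hB i himem).2.1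
        linarith
      obtain ⟨b, hb⟩ := hex
      have hinotin : ∀ b', i ∉ P b' := fun b' hmem =>
        (Finset.notMem_erase i B) (hPsub b' hmem)
      refine ⟨Function.update P b (insert i (P b)), ?_, ?_, ?_, ?_⟩
      · intro b'
        rcases eq_or_ne b' b with rfl | hne'
        · rw [Function.update_self]
          intro t ht
          rcases Finset.mem_insert.mp ht with rfl | ht'
          · exact himem
          · exact Finset.mem_of_mem_erase (hPsub _ ht')
        · rw [Function.update_of_ne hne']
          exact fun t ht => Finset.mem_of_mem_erase (hPsub _ ht)
      · intro b₁ b₂ hne'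
        have hmem' : ∀ c t, t ∈ Function.update P b (insert i (P b)) c →
            (t = i ∧ c = b) ∨ t ∈ P c := by
          intro c t ht
          rcases eq_or_ne c b with h | h
          · rw [h, Function.update_self] at ht
            rcases Finset.mem_insert.mp ht with rfl | ht'
            · exact Or.inl ⟨rfl, h⟩
            · exact Or.inr (h ▸ ht')
          · rw [Function.update_of_ne h] at ht
            exact Or.inr ht
        rw [Finset.disjoint_left]
        intro t ht1 ht2
        rcases hmem' b₁ t ht1 with ⟨rfl, hc1⟩ | hm1
        · rcases hmem' b₂ t ht2 with ⟨_, hc2⟩ | hm2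
          · exact hne' (hc1.trans hc2.symm)
          · exact hinotin b₂ hm2
        · rcases hmem' b₂ t ht2 with ⟨rfl, _⟩ | hm2
          · exact hinotin b₁ hm1
          · exact (Finset.disjoint_left.mp (hPdisj b₁ b₂ hne')) hm1 hm2
      · intro t ht
        rcases eq_or_ne t i with rfl | hti
        · exact ⟨b, by rw [Function.update_self]; exact Finset.mem_insert_self _ _⟩
        · obtain ⟨b', hb'⟩ := hPcover t (Finset.mem_erase.mpr ⟨hti, ht⟩)
          refine ⟨b', ?_⟩
          rcases eq_or_ne b' b with rfl | hne'
          · rw [Function.update_self]; exact Finset.mem_insert_of_mem hb'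
          · rw [Function.update_of_ne hne']; exact hb'
      · intro b' t ht
        rcases eq_or_ne b' b with rfl | hne'
        · rw [Function.update_self] at ht ⊢
          rcases Finset.mem_insert.mp ht with rfl | ht'
          · have : (insert t (P b')).filter (fun u => u < t) = P b' := by
              ext u
              simp only [Finset.mem_filter, Finset.mem_insert]
              constructor
              · rintro ⟨rfl | hu, hlt⟩
                · exact absurd hlt (lt_irrefl _)
                · exact hu
              · intro hu
                exact ⟨Or.inr hu, herase_lt u (hPsub b' hu)⟩
            rw [this]
            exact hb
          · have hti : t < i := herase_lt t (hPsub b' ht')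
            have : (insert i (P b')).filter (fun u => u < t)
                = (P b').filter (fun u => u < t) := by
              ext u
              simp only [Finset.mem_filter, Finset.mem_insert]
              constructor
              · rintro ⟨rfl | hu, hlt⟩
                · exact absurd hlt (not_lt.mpr hti.le)
                · exact ⟨hu, hlt⟩
              · rintro ⟨hu, hlt⟩; exact ⟨Or.inr hu, hlt⟩
            rw [this]
            exact hPgood b' t ht'
        · rw [Function.update_of_ne hne'] at ht ⊢
          exact hPgood b' t ht

lemma two_pow_floor_logb {y : ℝ} (hy : 1 ≤ y) :
    (2:ℝ) ^ ⌊Real.logb 2 y⌋₊ ≤ y ∧ y < 2 ^ (⌊Real.logb 2 y⌋₊ + 1) := by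
  have hy0 : (0:ℝ) < y := by linarith
  have hlog : 0 ≤ Real.logb 2 y := Real.logb_nonneg one_lt_two hy
  have h1 : ((⌊Real.logb 2 y⌋₊ : ℝ)) ≤ Real.logb 2 y := Nat.floor_le hlog
  have h2 : Real.logb 2 y < (⌊Real.logb 2 y⌋₊ : ℝ) + 1 := Nat.lt_floor_add_one _
  constructor
  · calc (2:ℝ) ^ ⌊Real.logb 2 y⌋₊ = (2:ℝ) ^ ((⌊Real.logb 2 y⌋₊ : ℕ) : ℝ) :=
        (Real.rpow_natCast 2 _).symm
      _ ≤ 2 ^ Real.logb 2 y := (Real.rpow_le_rpow_left_iff one_lt_two).mpr h1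
      _ = y := Real.rpow_logb two_pos (by norm_num) hy0
  · calc y = 2 ^ Real.logb 2 y := (Real.rpow_logb two_pos (by norm_num) hy0).symm
      _ < 2 ^ (((⌊Real.logb 2 y⌋₊ : ℕ) : ℝ) + 1) :=
        (Real.rpow_lt_rpow_left_iff one_lt_two).mpr h2
      _ = 2 ^ (((⌊Real.logb 2 y⌋₊ + 1 : ℕ)) : ℝ) := by push_cast; ring_nf
      _ = 2 ^ (⌊Real.logb 2 y⌋₊ + 1) := Real.rpow_natCast 2 _

lemma two_pow_ceil_logb {y : ℝ} (hy : 1 ≤ y) :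
    y ≤ (2:ℝ) ^ ⌈Real.logb 2 y⌉₊ ∧ (2:ℝ) ^ ⌈Real.logb 2 y⌉₊ < 2 * y := by
  have hy0 : (0:ℝ) < y := by linarith
  have hlog : 0 ≤ Real.logb 2 y := Real.logb_nonneg one_lt_two hy
  have h1 : Real.logb 2 y ≤ ((⌈Real.logb 2 y⌉₊ : ℝ)) := Nat.le_ceil _
  have h2 : ((⌈Real.logb 2 y⌉₊ : ℝ)) < Real.logb 2 y + 1 := Nat.ceil_lt_add_one hlog
  constructor
  · calc y = 2 ^ Real.logb 2 y := (Real.rpow_logb two_pos (by norm_num) hy0).symm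
      _ ≤ 2 ^ ((⌈Real.logb 2 y⌉₊ : ℕ) : ℝ) := (Real.rpow_le_rpow_left_iff one_lt_two).mpr h1
      _ = 2 ^ ⌈Real.logb 2 y⌉₊ := Real.rpow_natCast 2 _
  · calc (2:ℝ) ^ ⌈Real.logb 2 y⌉₊ = 2 ^ ((⌈Real.logb 2 y⌉₊ : ℕ) : ℝ) :=
        (Real.rpow_natCast 2 _).symm
      _ < 2 ^ (Real.logb 2 y + 1) := (Real.rpow_lt_rpow_left_iff one_lt_two).mpr h2
      _ = 2 ^ Real.logb 2 y * 2 ^ (1:ℝ) := Real.rpow_add two_pos _ _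
      _ = 2 * y := by
          rw [Real.rpow_logb two_pos (by norm_num) hy0, Real.rpow_one]; ring

set_option maxHeartbeats 1000000 in
/-- self-normalized sum bound via the ℓ1-Eluder dimension. -/
theorem self_normalized_sum_le {X : Type*} [Nonempty X]
    (Ψ : Set (X → ℝ)) (hΨne : Ψ.Nonempty) (hΨbdd : ∀ g ∈ Ψ, ∀ x, |g x| ≤ 1)
    (lam : ℝ) (hlam : 1 < lam) (n : ℕ) (hn : 1 ≤ n) (x : Fin n → X)
    (d : ℕ) (hd : EluderDimLE Ψ (1 / (8 * lam * n)) d) :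
    ∑ i : Fin n,
        min 1 (⨆ g : Ψ, |(g : X → ℝ) (x i)| /
          (lam + ∑ t ∈ Finset.Iio i, |(g : X → ℝ) (x t)|)) ≤
      12 * (Real.logb 2 (4 * lam * n)) ^ 2 * d + lam⁻¹ := by
  classical
  have : Nonempty Ψ := hΨne.to_subtype
  set L : ℝ := Real.logb 2 (4 * lam * n) with hLdef
  have hn1 : (1:ℝ) ≤ n := by exact_mod_cast hn
  have hlam0 : (0:ℝ) < lam := by linarith
  have hlamn1 : (1:ℝ) ≤ lam * n := by nlinarith
  have hlamn0 : (0:ℝ) < lam * n := by linarith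
  set T : Fin n → ℝ := fun i => min 1 (⨆ g : Ψ, |(g : X → ℝ) (x i)| /
          (lam + ∑ t ∈ Finset.Iio i, |(g : X → ℝ) (x t)|)) with hTdef
  -- basic facts about denominators and sums
  have hSnonneg : ∀ (g : X → ℝ) (i : Fin n), 0 ≤ ∑ t ∈ Finset.Iio i, |g (x t)| :=
    fun g i => Finset.sum_nonneg fun t _ => abs_nonneg _
  have hSle : ∀ g ∈ Ψ, ∀ i : Fin n, (∑ t ∈ Finset.Iio i, |g (x t)|) ≤ n := by
    intro g hg i
    calc (∑ t ∈ Finset.Iio i, |g (x t)|) ≤ ∑ t ∈ Finset.Iio i, 1 :=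
          Finset.sum_le_sum fun t _ => hΨbdd g hg (x t)
      _ = (Finset.Iio i).card := by simp
      _ ≤ (Finset.univ : Finset (Fin n)).card := by
          exact_mod_cast Finset.card_le_card (Finset.subset_univ _)
      _ = n := by simp
  have hbdd : ∀ i : Fin n, BddAbove (Set.range fun g : Ψ => |(g : X → ℝ) (x i)| /
      (lam + ∑ t ∈ Finset.Iio i, |(g : X → ℝ) (x t)|)) := by
    intro i
    refine ⟨1, ?_⟩
    rintro v ⟨g, rfl⟩
    have hden : (0:ℝ) < lam + ∑ t ∈ Finset.Iio i, |(g : X → ℝ) (x t)| := by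
      have := hSnonneg (g : X → ℝ) i; linarith
    apply div_le_one_of_le₀
    · have := hΨbdd (g : X → ℝ) g.2 (x i)
      have := hSnonneg (g : X → ℝ) i
      linarith
    · linarith
  have hT0 : ∀ i, 0 ≤ T i := by
    intro i
    refine le_min zero_le_one ?_
    obtain ⟨g, hg⟩ := hΨne
    refine le_trans ?_ (le_ciSup (hbdd i) ⟨g, hg⟩)
    have hden : (0:ℝ) < lam + ∑ t ∈ Finset.Iio i, |g (x t)| := by
      have := hSnonneg g i; linarith
    positivity
  have hT1 : ∀ i, T i ≤ 1 := fun i => min_le_left _ _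
  -- choose near-optimal witnesses
  have hch : ∀ i : Fin n, ∃ g, g ∈ Ψ ∧ (0 < T i →
      T i / 2 < |g (x i)| / (lam + ∑ t ∈ Finset.Iio i, |g (x t)|)) := by
    intro i
    by_cases h : 0 < T i
    · have h2 : T i / 2 < ⨆ g : Ψ, |(g : X → ℝ) (x i)| /
          (lam + ∑ t ∈ Finset.Iio i, |(g : X → ℝ) (x t)|) :=
        lt_of_lt_of_le (by linarith) (min_le_right 1 _)
      obtain ⟨⟨g, hg⟩, hlt⟩ := exists_lt_of_lt_ciSup h2
      exact ⟨g, hg, fun _ => hlt⟩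
    · obtain ⟨g, hg⟩ := hΨne
      exact ⟨g, hg, fun h' => absurd h' h⟩
  choose gg hggΨ hgg using hch
  set K : ℕ := ⌈Real.logb 2 (lam * n)⌉₊ with hKdef
  set J : ℕ := ⌈Real.logb 2 (2 * n)⌉₊ with hJdef
  set ki : Fin n → ℕ := fun i => ⌊Real.logb 2 (T i)⁻¹⌋₊ with hkidef
  set ji : Fin n → ℕ := fun i =>
    ⌊Real.logb 2 ((lam + ∑ t ∈ Finset.Iio i, |gg i (x t)|) / lam)⌋₊ with hjidef
  obtain ⟨hK1, hK2⟩ := two_pow_ceil_logb hlamn1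
  have h2n1 : (1:ℝ) ≤ 2 * n := by linarith
  obtain ⟨hJ1, hJ2⟩ := two_pow_ceil_logb h2n1
  -- per-index facts for big indices
  have hbig_facts : ∀ i : Fin n, 1 / (lam * n) < T i →
      ki i < K ∧ ji i < J ∧
      ((2:ℝ) ^ (ki i + 1))⁻¹ < T i ∧ T i ≤ ((2:ℝ) ^ ki i)⁻¹ ∧
      lam * 2 ^ (ji i) ≤ lam + ∑ t ∈ Finset.Iio i, |gg i (x t)| ∧
      lam + (∑ t ∈ Finset.Iio i, |gg i (x t)|) < lam * 2 ^ (ji i + 1) := by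
    intro i hb
    have hTpos : 0 < T i := lt_trans (by positivity) hb
    have hTinv1 : (1:ℝ) ≤ (T i)⁻¹ := (one_le_inv₀ hTpos).mpr (hT1 i)
    obtain ⟨hf1, hf2⟩ := two_pow_floor_logb hTinv1
    have hkpos : (0:ℝ) < 2 ^ ki i := by positivity
    have hk1pos : (0:ℝ) < 2 ^ (ki i + 1) := by positivity
    have hThigh : T i ≤ ((2:ℝ) ^ ki i)⁻¹ := by
      rw [← inv_inv (T i)]
      exact inv_anti₀ hkpos hf1
    have hTlow : ((2:ℝ) ^ (ki i + 1))⁻¹ < T i := by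
      rw [← inv_inv (T i)]
      exact inv_strictAnti₀ (by positivity) hf2
    have hTinvlt : (T i)⁻¹ < lam * n := by
      have h1 : (lam * n)⁻¹ < T i := by rwa [← one_div]
      have := inv_lt_of_inv_lt₀ hlamn0 h1
      simpa using this
    have hkK : ki i < K := by
      have hpow : (2:ℝ) ^ ki i < 2 ^ K := by
        calc (2:ℝ) ^ ki i ≤ (T i)⁻¹ := hf1
          _ < lam * n := hTinvlt
          _ ≤ 2 ^ K := hK1
      exact (pow_lt_pow_iff_right₀ one_lt_two).mp hpow
    -- denominator facts
    have hS0 := hSnonneg (gg i) i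
    have hSn := hSle (gg i) (hggΨ i) i
    have hD1 : (1:ℝ) ≤ (lam + ∑ t ∈ Finset.Iio i, |gg i (x t)|) / lam := by
      rw [le_div_iff₀ hlam0]
      linarith
    obtain ⟨hg1, hg2⟩ := two_pow_floor_logb hD1
    have hDlow : lam * 2 ^ (ji i) ≤ lam + ∑ t ∈ Finset.Iio i, |gg i (x t)| := by
      rw [mul_comm]
      exact (le_div_iff₀ hlam0).mp hg1
    have hDhigh : lam + (∑ t ∈ Finset.Iio i, |gg i (x t)|) < lam * 2 ^ (ji i + 1) := by
      rw [mul_comm]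
      exact (div_lt_iff₀ hlam0).mp hg2
    have hjJ : ji i < J := by
      have hpow : (2:ℝ) ^ ji i < 2 ^ J := by
        calc (2:ℝ) ^ ji i ≤ (lam + ∑ t ∈ Finset.Iio i, |gg i (x t)|) / lam := hg1
          _ < 2 * n := by
              rw [div_lt_iff₀ hlam0]
              nlinarith
          _ ≤ 2 ^ J := hJ1
      exact (pow_lt_pow_iff_right₀ one_lt_two).mp hpow
    exact ⟨hkK, hjJ, hTlow, hThigh, hDlow, hDhigh⟩
  set Big : Finset (Fin n) := Finset.univ.filter (fun i => 1 / (lam * n) < T i) with hBigdef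
  have hsplit : ∑ i : Fin n, T i =
      (∑ i ∈ Big, T i) +
        ∑ i ∈ Finset.univ.filter (fun i => ¬ (1 / (lam * n) < T i)), T i :=
    (Finset.sum_filter_add_sum_filter_not _ _ _).symm
  -- small part
  have hsmall : (∑ i ∈ Finset.univ.filter (fun i => ¬ (1 / (lam * n) < T i)), T i) ≤ lam⁻¹ := by
    have hcard : ((Finset.univ.filter (fun i => ¬ (1 / (lam * n) < T i))).card : ℝ) ≤ n := by
      exact_mod_cast Finset.card_le_card (Finset.filter_subset _ _) |>.trans
        (le_of_eq (by simp))
    calc (∑ i ∈ Finset.univ.filter (fun i => ¬ (1 / (lam * n) < T i)), T i)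
        ≤ ∑ _i ∈ Finset.univ.filter (fun i => ¬ (1 / (lam * n) < T i)), 1 / (lam * n) :=
          Finset.sum_le_sum fun i hi => not_lt.mp (Finset.mem_filter.mp hi).2
      _ = ((Finset.univ.filter (fun i => ¬ (1 / (lam * n) < T i))).card : ℝ) * (1 / (lam * n)) := by
          rw [Finset.sum_const, nsmul_eq_mul]
      _ ≤ n * (1 / (lam * n)) := by
          apply mul_le_mul_of_nonneg_right hcard (by positivity)
      _ = lam⁻¹ := by
          rw [one_div]
          field_simp
  -- big part
  have hfiber : ∀ p ∈ Finset.range K ×ˢ Finset.range J,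
      (∑ i ∈ Big.filter (fun i => (ki i, ji i) = p), T i) ≤ 9 * d := by
    rintro ⟨k, j⟩ hp
    obtain ⟨hkK, hjJ⟩ := Finset.mem_product.mp hp
    rw [Finset.mem_range] at hkK hjJ
    set fib := Big.filter (fun i => (ki i, ji i) = (k, j)) with hfibdef
    have hmem : ∀ i ∈ fib, 1 / (lam * n) < T i ∧ ki i = k ∧ ji i = j := by
      intro i hi
      obtain ⟨hiB, hpe⟩ := Finset.mem_filter.mp hi
      obtain ⟨h1, h2⟩ := Prod.ext_iff.mp hpe
      exact ⟨(Finset.mem_filter.mp hiB).2, h1, h2⟩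
    have hcard : fib.card ≤ (2 ^ (k + 3) + 1) * d := by
      apply partition_card_le (ε := lam * 2 ^ j / 2 ^ (k + 2)) (M := lam * 2 ^ (j + 1))
        (N := 2 ^ (k + 3) + 1) hd ?_ ?_ x gg fib ?_
      · -- scale bound
        rw [div_le_div_iff₀ (by positivity) (by positivity)]
        have hpowK : (2:ℝ) ^ (k + 2) ≤ 2 ^ (K + 1) :=
          pow_le_pow_right₀ one_le_two (by omega)
        have h2K1 : (2:ℝ) ^ (K + 1) < 4 * (lam * n) := by
          rw [pow_succ]; nlinarith [hK2]
        have h2j : (1:ℝ) ≤ 2 ^ j := one_le_pow₀ one_le_two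
        have h1lam2j : (1:ℝ) ≤ lam * 2 ^ j := by nlinarith [h2j]
        have h8 : (0:ℝ) ≤ 8 * lam * n := by positivity
        have hmm := mul_le_mul_of_nonneg_right h1lam2j h8
        nlinarith [hpowK, h2K1]
      · -- M < N * ε
        have hεpos : (0:ℝ) < lam * 2 ^ j / 2 ^ (k + 2) := by positivity
        have key : ((2 ^ (k + 3) + 1 : ℕ) : ℝ) * (lam * 2 ^ j / 2 ^ (k + 2))
            = lam * 2 ^ (j + 1) + lam * 2 ^ j / 2 ^ (k + 2) := by
          push_cast
          field_simp
          ring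
        rw [key]
        linarith
      · intro i hi
        obtain ⟨hb, hk', hj'⟩ := hmem i hi
        obtain ⟨-, -, hTlow, -, hDlow, hDhigh⟩ := hbig_facts i hb
        rw [hk'] at hTlow
        rw [hj'] at hDlow hDhigh
        have hS0 := hSnonneg (gg i) i
        have hTpos : 0 < T i := lt_trans (by positivity) hb
        have hden : (0:ℝ) < lam + ∑ t ∈ Finset.Iio i, |gg i (x t)| := by linarith
        refine ⟨hggΨ i, by linarith, ?_⟩
        have hratio := hgg i hTpos
        have hstep : ((2:ℝ) ^ (k + 2))⁻¹ <
            |gg i (x i)| / (lam + ∑ t ∈ Finset.Iio i, |gg i (x t)|) := by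
          have e : ((2:ℝ) ^ (k + 2))⁻¹ = ((2:ℝ) ^ (k + 1))⁻¹ / 2 := by
            rw [show k + 2 = (k + 1) + 1 from rfl, pow_succ]
            rw [mul_inv]
            ring
          rw [e]
          calc ((2:ℝ) ^ (k + 1))⁻¹ / 2 < T i / 2 := by linarith
            _ < _ := hratio
        have h2 : ((2:ℝ) ^ (k + 2))⁻¹ * (lam + ∑ t ∈ Finset.Iio i, |gg i (x t)|)
            < |gg i (x i)| := (lt_div_iff₀ hden).mp hstep
        have h3 : lam * 2 ^ j / 2 ^ (k + 2)
            ≤ ((2:ℝ) ^ (k + 2))⁻¹ * (lam + ∑ t ∈ Finset.Iio i, |gg i (x t)|) := by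
          rw [div_eq_mul_inv, mul_comm]
          exact mul_le_mul_of_nonneg_left hDlow (by positivity)
        linarith
    have hsum : (∑ i ∈ fib, T i) ≤ (fib.card : ℝ) * ((2:ℝ) ^ k)⁻¹ := by
      have := Finset.sum_le_card_nsmul fib T ((2:ℝ) ^ k)⁻¹ (fun i hi => by
        obtain ⟨hb, hk', hj'⟩ := hmem i hi
        obtain ⟨-, -, -, hThigh, -, -⟩ := hbig_facts i hb
        rw [hk'] at hThigh
        exact hThigh)
      simpa [nsmul_eq_mul] using this
    have h2k1 : (1:ℝ) ≤ 2 ^ k := one_le_pow₀ one_le_two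
    have hkinv : ((2:ℝ) ^ k) * ((2:ℝ) ^ k)⁻¹ = 1 := mul_inv_cancel₀ (by positivity)
    have hinv0 : (0:ℝ) ≤ ((2:ℝ) ^ k)⁻¹ := by positivity
    have hinvle : ((2:ℝ) ^ k)⁻¹ ≤ 1 := by
      nlinarith [mul_nonneg (sub_nonneg.mpr h2k1) hinv0]
    have hd0 : (0:ℝ) ≤ d := Nat.cast_nonneg _
    calc (∑ i ∈ fib, T i) ≤ (fib.card : ℝ) * ((2:ℝ) ^ k)⁻¹ := hsum
      _ ≤ (((2 ^ (k + 3) + 1) * d : ℕ) : ℝ) * ((2:ℝ) ^ k)⁻¹ := by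
          apply mul_le_mul_of_nonneg_right _ hinv0
          exact_mod_cast hcard
      _ ≤ 9 * d := by
          push_cast
          have e2 : (2:ℝ) ^ (k + 3) = 2 ^ k * 8 := by rw [pow_add]; norm_num
          calc ((2:ℝ) ^ (k + 3) + 1) * d * ((2:ℝ) ^ k)⁻¹
              = 8 * d * (2 ^ k * (2 ^ k)⁻¹) + d * (2 ^ k)⁻¹ := by rw [e2]; ring
            _ = 8 * d + d * (2 ^ k)⁻¹ := by rw [hkinv]; ring
            _ ≤ 8 * d + d * 1 := by nlinarith [mul_le_mul_of_nonneg_left hinvle hd0]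
            _ ≤ 9 * d := by linarith
  have hbigsum : (∑ i ∈ Big, T i) ≤ (K * J) * (9 * d) := by
    rw [← Finset.sum_fiberwise_of_maps_to (g := fun i => (ki i, ji i))
      (t := Finset.range K ×ˢ Finset.range J) ?hmap T]
    case hmap =>
      intro i hi
      have hb := (Finset.mem_filter.mp hi).2
      obtain ⟨h1, h2, _⟩ := hbig_facts i hb
      exact Finset.mem_product.mpr ⟨Finset.mem_range.mpr h1, Finset.mem_range.mpr h2⟩
    calc (∑ p ∈ Finset.range K ×ˢ Finset.range J,
          ∑ i ∈ Big.filter (fun i => (ki i, ji i) = p), T i)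
        ≤ ∑ _p ∈ Finset.range K ×ˢ Finset.range J, (9 : ℝ) * d :=
          Finset.sum_le_sum hfiber
      _ = (K * J) * (9 * d) := by
          rw [Finset.sum_const, Finset.card_product]
          push_cast [nsmul_eq_mul, Finset.card_range]
          ring
  -- final arithmetic
  have h4ln0 : (0:ℝ) < 4 * lam * n := by positivity
  have hLge2 : (2:ℝ) ≤ L := by
    have h42 : (2:ℝ) ^ (2:ℝ) = 4 := by
      rw [show (2:ℝ) = ((2:ℕ):ℝ) from by norm_num, Real.rpow_natCast]
      norm_num
    rw [hLdef, Real.le_logb_iff_rpow_le one_lt_two h4ln0, h42]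
    nlinarith
  have hKL : (K : ℝ) ≤ L - 1 := by
    rw [le_sub_iff_add_le, hLdef, Real.le_logb_iff_rpow_le one_lt_two h4ln0]
    have : ((K:ℝ) + 1) = ((K + 1 : ℕ) : ℝ) := by push_cast; ring
    rw [this, Real.rpow_natCast, pow_succ]
    nlinarith
  have hJL : (J : ℝ) ≤ L := by
    rw [hLdef, Real.le_logb_iff_rpow_le one_lt_two h4ln0]
    rw [Real.rpow_natCast]
    nlinarith
  have hfinal : (K * J : ℝ) * (9 * d) ≤ 12 * L ^ 2 * d := by
    have hJ0 : (0:ℝ) ≤ J := Nat.cast_nonneg _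
    have hd0 : (0:ℝ) ≤ d := Nat.cast_nonneg _
    have hKJ : (K:ℝ) * J ≤ (L - 1) * L := mul_le_mul hKL hJL hJ0 (by linarith)
    have h2 : (0:ℝ) ≤ (3 * L ^ 2 + 9 * L) * d := mul_nonneg (by nlinarith) hd0
    calc (K * J : ℝ) * (9 * d) ≤ ((L - 1) * L) * (9 * d) :=
          mul_le_mul_of_nonneg_right hKJ (by positivity)
      _ ≤ 12 * L ^ 2 * d := by nlinarith [h2]
  calc ∑ i : Fin n, T i ≤ (K * J) * (9 * d) + lam⁻¹ := by
        rw [hsplit]; exact add_le_add hbigsum hsmall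
    _ ≤ 12 * L ^ 2 * d + lam⁻¹ := by linarith
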